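/- Let ρ > 0, and let A be a real n×n matrix, B a real n×m matrix, C a real p×n matrix, D a real p×m matrix, M a symmetric real p×p matrix, P a symmetric positive definite real n×n matrix, and λ ≥ 0 a real number. Suppose the linear matrix inequality [[AᵀPA − ρ²P, AᵀPB],[BᵀPA, BᵀPB]] + λ·[C D]ᵀ M [C D] ⪯ 0 holds (i.e., this symmetric (n+m)×(n+m) matrix is negative semidefinite). Let x : ℕ → ℝⁿ, u : ℕ → ℝᵐ, z : ℕ → ℝᵖ be sequences satisfying x_{k+1} = A x_k + B u_k and z_k = C x_k + D u_k for all k, and suppose the ρ-hard IQC sum condition holds: for every N, Σ_{k=0}^{N} ρ^{−2k} z_kᵀ M z_k ≥ 0. Then for all k ≥ 0, x_kᵀ P x_k ≤ ρ^{2k} x₀ᵀ P x₀, and consequently ‖x_k‖ ≤ √(cond(P)) · ρ^k · ‖x₀‖, where cond(P) is the ratio of the largest to the smallest eigenvalue of P. -/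

import Mathlib

open Matrix

lemma lessard_dq {α β γ : Type*} [Fintype α] [Fintype β] [Fintype γ]
    (A : Matrix α β ℝ) (N : Matrix α γ ℝ) (v : β → ℝ) (w : γ → ℝ) :
    v ⬝ᵥ ((Aᵀ * N) *ᵥ w) = (A *ᵥ v) ⬝ᵥ (N *ᵥ w) := by
  rw [← mulVec_mulVec, dotProduct_mulVec, vecMul_transpose]

lemma lessard_rayleigh {n : ℕ} (P : Matrix (Fin n) (Fin n) ℝ) (hP : P.PosDef) (v : Fin n → ℝ) :
    (⨅ i, hP.1.eigenvalues i) * (v ⬝ᵥ v) ≤ v ⬝ᵥ (P *ᵥ v) ∧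
    v ⬝ᵥ (P *ᵥ v) ≤ (⨆ i, hP.1.eigenvalues i) * (v ⬝ᵥ v) := by
  rcases Nat.eq_zero_or_pos n with hn | hn
  · subst hn
    simp [dotProduct]
  haveI : Nonempty (Fin n) := ⟨⟨0, hn⟩⟩
  set U : Matrix (Fin n) (Fin n) ℝ := (hP.1.eigenvectorUnitary : Matrix (Fin n) (Fin n) ℝ) with hU
  have hstar : star U = Uᵀ := by
    ext i j; simp [star]
  set y : Fin n → ℝ := Uᵀ *ᵥ v with hy
  have hUU : U * Uᵀ = 1 := by
    have := (Unitary.mem_iff.mp hP.1.eigenvectorUnitary.2).2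
    rwa [hstar] at this
  have hvv : v ⬝ᵥ v = y ⬝ᵥ y := by
    rw [hy, dotProduct_mulVec, vecMul_transpose, mulVec_mulVec, hUU, one_mulVec]
  have hspec : P = U * (diagonal hP.1.eigenvalues * Uᵀ) := by
    have h := hP.1.spectral_theorem
    rw [Unitary.conjStarAlgAut_apply, ← hU, hstar, mul_assoc] at h
    simpa using h
  have hPvv : v ⬝ᵥ (P *ᵥ v) = ∑ i, hP.1.eigenvalues i * (y i)^2 := by
    calc v ⬝ᵥ (P *ᵥ v)
        = v ⬝ᵥ ((Uᵀᵀ * (diagonal hP.1.eigenvalues * Uᵀ)) *ᵥ v) := by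
          rw [transpose_transpose, ← hspec]
      _ = ∑ i, hP.1.eigenvalues i * (y i)^2 := by
          rw [lessard_dq, ← mulVec_mulVec, ← hy]
          simp [mulVec_diagonal, dotProduct, sq, mul_comm, mul_assoc, mul_left_comm]
  have hyyv : y ⬝ᵥ y = ∑ i, (y i)^2 := by simp [dotProduct, sq]
  constructor
  · rw [hPvv, hvv, hyyv, Finset.mul_sum]
    refine Finset.sum_le_sum fun i _ => ?_
    exact mul_le_mul_of_nonneg_right
      (ciInf_le (Set.Finite.bddBelow (Set.finite_range _)) i) (sq_nonneg _)
  · rw [hPvv, hvv, hyyv, Finset.mul_sum]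
    refine Finset.sum_le_sum fun i _ => ?_
    exact mul_le_mul_of_nonneg_right
      (le_ciSup (Set.Finite.bddAbove (Set.finite_range _)) i) (sq_nonneg _)

/-- Convergence theorem of Lessard et al. for an LTI system in feedback with a
nonlinearity satisfying a ρ-hard IQC, stated on trajectories of the augmented system.
The Euclidean norm is written as `Real.sqrt (x ⬝ᵥ x)` and
`cond P = λ_max(P) / λ_min(P)` via the eigenvalues of the positive definite matrix `P`. -/
theorem stmt_0 {n m p : ℕ} (ρ : ℝ) (hρ : 0 < ρ)
    (A : Matrix (Fin n) (Fin n) ℝ) (B : Matrix (Fin n) (Fin m) ℝ)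
    (C : Matrix (Fin p) (Fin n) ℝ) (D : Matrix (Fin p) (Fin m) ℝ)
    (M : Matrix (Fin p) (Fin p) ℝ) (hM : M.IsSymm)
    (P : Matrix (Fin n) (Fin n) ℝ) (hPsymm : P.IsSymm) (hP : P.PosDef)
    (lam : ℝ) (hlam : 0 ≤ lam)
    (hLMI : ∀ v : Fin n ⊕ Fin m → ℝ,
      v ⬝ᵥ ((Matrix.fromBlocks (Aᵀ * P * A - ρ ^ 2 • P) (Aᵀ * P * B)
              (Bᵀ * P * A) (Bᵀ * P * B)
            + lam • ((Matrix.fromCols C D)ᵀ * M * Matrix.fromCols C D)) *ᵥ v) ≤ 0)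
    (x : ℕ → Fin n → ℝ) (u : ℕ → Fin m → ℝ) (z : ℕ → Fin p → ℝ)
    (hx : ∀ k, x (k + 1) = A *ᵥ x k + B *ᵥ u k)
    (hz : ∀ k, z k = C *ᵥ x k + D *ᵥ u k)
    (hIQC : ∀ N : ℕ, 0 ≤ ∑ k ∈ Finset.range (N + 1),
      (ρ ^ (2 * k))⁻¹ * (z k ⬝ᵥ (M *ᵥ z k))) :
    ∀ k : ℕ,
      x k ⬝ᵥ (P *ᵥ x k) ≤ ρ ^ (2 * k) * (x 0 ⬝ᵥ (P *ᵥ x 0)) ∧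
      Real.sqrt (x k ⬝ᵥ x k) ≤
        Real.sqrt ((⨆ i, hP.1.eigenvalues i) / (⨅ i, hP.1.eigenvalues i)) * ρ ^ k *
          Real.sqrt (x 0 ⬝ᵥ x 0) := by
  -- notation
  set V : ℕ → ℝ := fun k => x k ⬝ᵥ (P *ᵥ x k) with hV
  set σ : ℕ → ℝ := fun k => z k ⬝ᵥ (M *ᵥ z k) with hσ
  -- energy decrease step
  have key : ∀ k, V (k+1) + lam * σ k ≤ ρ ^ 2 * V k := by
    intro k
    have h := hLMI (Sum.elim (x k) (u k))
    have hG : Matrix.fromCols C D *ᵥ Sum.elim (x k) (u k) = z k := by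
      rw [fromCols_mulVec_sumElim, hz]
    have h2 : Sum.elim (x k) (u k) ⬝ᵥ
        ((lam • ((Matrix.fromCols C D)ᵀ * M * Matrix.fromCols C D)) *ᵥ Sum.elim (x k) (u k))
        = lam * σ k := by
      rw [smul_mulVec, dotProduct_smul, smul_eq_mul,
        Matrix.mul_assoc (Matrix.fromCols C D)ᵀ M (Matrix.fromCols C D),
        lessard_dq, ← mulVec_mulVec, hG]
    have h1 : Sum.elim (x k) (u k) ⬝ᵥ ((Matrix.fromBlocks (Aᵀ * P * A - ρ ^ 2 • P) (Aᵀ * P * B)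
                (Bᵀ * P * A) (Bᵀ * P * B)) *ᵥ Sum.elim (x k) (u k))
        = V (k+1) - ρ ^ 2 * V k := by
      simp only [hV]
      rw [fromBlocks_mulVec, sumElim_dotProduct_sumElim, hx k]
      rw [dotProduct_add, dotProduct_add, sub_mulVec, dotProduct_sub,
        smul_mulVec, dotProduct_smul, smul_eq_mul,
        Matrix.mul_assoc Aᵀ P A, lessard_dq, Matrix.mul_assoc Aᵀ P B, lessard_dq,
        Matrix.mul_assoc Bᵀ P A, lessard_dq, Matrix.mul_assoc Bᵀ P B, lessard_dq,
        mulVec_add, dotProduct_add, add_dotProduct, add_dotProduct]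
      simp only [Sum.elim_comp_inl, Sum.elim_comp_inr, ← mulVec_mulVec]
      ring
    rw [add_mulVec, dotProduct_add, h1, h2] at h
    linarith
  -- telescoping
  have hW : ∀ N : ℕ, V N / ρ ^ (2*N)
      + lam * ∑ k ∈ Finset.range N, (ρ ^ (2*(k+1)))⁻¹ * σ k ≤ V 0 := by
    intro N
    induction N with
    | zero => simp
    | succ N ih =>
      have hpow : (0:ℝ) < ρ ^ (2*N) := pow_pos hρ _
      have hpow2 : (0:ℝ) < ρ ^ (2*(N+1)) := pow_pos hρ _
      have hstep : V (N+1) / ρ ^ (2*(N+1)) + lam * ((ρ ^ (2*(N+1)))⁻¹ * σ N)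
          ≤ V N / ρ ^ (2*N) := by
        have e : V (N+1) / ρ ^ (2*(N+1)) + lam * ((ρ ^ (2*(N+1)))⁻¹ * σ N)
            = (V (N+1) + lam * σ N) / ρ ^ (2*(N+1)) := by
          field_simp
        rw [e, div_le_div_iff₀ hpow2 hpow]
        have epow : ρ ^ (2*(N+1)) = ρ ^ (2*N) * ρ ^ 2 := by
          rw [← pow_add]; ring_nf
        rw [epow]
        nlinarith [key N, hpow.le]
      rw [Finset.sum_range_succ, mul_add]
      ring_nf at hstep ih ⊢
      linarith
  -- nonnegativity of the IQC sum with shifted weights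
  have hsum : ∀ N : ℕ, 0 ≤ ∑ k ∈ Finset.range N, (ρ ^ (2*(k+1)))⁻¹ * σ k := by
    intro N
    cases N with
    | zero => simp
    | succ N =>
      have e : ∑ k ∈ Finset.range (N+1), (ρ ^ (2*(k+1)))⁻¹ * σ k
          = (ρ ^ 2)⁻¹ * ∑ k ∈ Finset.range (N+1), (ρ ^ (2*k))⁻¹ * σ k := by
        rw [Finset.mul_sum]
        refine Finset.sum_congr rfl fun k _ => ?_
        rw [show 2*(k+1) = 2*k + 2 by ring, pow_add, mul_inv]
        ring
      rw [e]
      exact mul_nonneg (inv_nonneg.2 (pow_nonneg hρ.le 2)) (hIQC N)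
  -- part 1
  have part1 : ∀ k : ℕ, V k ≤ ρ ^ (2*k) * V 0 := by
    intro k
    have h1 := hW k
    have h2 := mul_nonneg hlam (hsum k)
    have h3 : V k / ρ ^ (2*k) ≤ V 0 := by linarith
    have := (div_le_iff₀ (pow_pos hρ (2*k))).mp h3
    linarith [this, mul_comm (V 0) (ρ ^ (2*k))]
  intro k
  refine ⟨part1 k, ?_⟩
  -- part 2
  rcases Nat.eq_zero_or_pos n with hn | hn
  · have hx0 : x k ⬝ᵥ x k = 0 := by
      subst hn; simp [dotProduct]
    rw [hx0, Real.sqrt_zero]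
    positivity
  haveI : Nonempty (Fin n) := ⟨⟨0, hn⟩⟩
  set a : ℝ := ⨅ i, hP.1.eigenvalues i with ha
  set b : ℝ := ⨆ i, hP.1.eigenvalues i with hb
  obtain ⟨i0, -, hmin⟩ := Finset.exists_min_image Finset.univ hP.1.eigenvalues
    ⟨⟨0, hn⟩, Finset.mem_univ _⟩
  have haeq : a = hP.1.eigenvalues i0 :=
    le_antisymm (ciInf_le (Set.Finite.bddBelow (Set.finite_range _)) i0)
      (le_ciInf fun j => hmin j (Finset.mem_univ _))
  have hapos : 0 < a := haeq ▸ hP.eigenvalues_pos i0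
  have hbpos : 0 < b :=
    lt_of_lt_of_le (hP.eigenvalues_pos i0)
      (le_ciSup (Set.Finite.bddAbove (Set.finite_range _)) i0)
  have h1 := (lessard_rayleigh P hP (x k)).1
  have h3 := (lessard_rayleigh P hP (x 0)).2
  have hx0nn : 0 ≤ x 0 ⬝ᵥ x 0 := by
    simp only [dotProduct]
    exact Finset.sum_nonneg fun i _ => mul_self_nonneg _
  have key2 : x k ⬝ᵥ x k ≤ (b / a) * (ρ ^ k)^2 * (x 0 ⬝ᵥ x 0) := by
    have hpowe : (ρ ^ k)^2 = ρ ^ (2*k) := by rw [← pow_mul, mul_comm]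
    rw [hpowe, div_mul_eq_mul_div, div_mul_eq_mul_div, le_div_iff₀ hapos]
    have h4 := mul_le_mul_of_nonneg_left h3 (pow_nonneg hρ.le (2*k))
    nlinarith [part1 k]
  calc Real.sqrt (x k ⬝ᵥ x k) ≤ Real.sqrt ((b / a) * (ρ ^ k)^2 * (x 0 ⬝ᵥ x 0)) :=
        Real.sqrt_le_sqrt key2
    _ = Real.sqrt (b / a) * ρ ^ k * Real.sqrt (x 0 ⬝ᵥ x 0) := by
        rw [Real.sqrt_mul (by positivity), Real.sqrt_mul (by positivity),
          Real.sqrt_sq (pow_nonneg hρ.le k)]
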